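/- Let K be a field of characteristic zero and let A be a K-bialgebra that is generated as a K-algebra by its space of primitive elements P = P(A). Then P is closed under the commutator bracket [x,y] := xy − yx (so P is a Lie subalgebra of A with the commutator bracket), and the canonical algebra homomorphism U(P) → A from the universal enveloping algebra of the Lie algebra (P, [−,−]) to A, induced by the inclusion P ↪ A via the universal property of U(P), is bijective; hence A is isomorphic as an algebra to the universal enveloping algebra of P. -/

import Mathlib

open TensorProduct LinearMap

noncomputable section

variable (K : Type*) [Field K]

section BraidedDefs

variable (V : Type*) [AddCommGroup V] [Module K V]

/-- The Yang–Baxter (braid) equation for `c : V ⊗ V → V ⊗ V`: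
`c₁ c₂ c₁ = c₂ c₁ c₂` on `(V ⊗ V) ⊗ V`, where `c₁ = c ⊗ id` and `c₂ = id ⊗ c`
(transported along the associator). -/
def YangBaxter (c : V ⊗[K] V →ₗ[K] V ⊗[K] V) : Prop :=
  (rTensor V c) ∘ₗ
      ((TensorProduct.assoc K V V V).symm.toLinearMap ∘ₗ (lTensor V c) ∘ₗ
        (TensorProduct.assoc K V V V).toLinearMap) ∘ₗ (rTensor V c)
    = ((TensorProduct.assoc K V V V).symm.toLinearMap ∘ₗ (lTensor V c) ∘ₗ
        (TensorProduct.assoc K V V V).toLinearMap) ∘ₗ (rTensor V c) ∘ₗ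
      ((TensorProduct.assoc K V V V).symm.toLinearMap ∘ₗ (lTensor V c) ∘ₗ
        (TensorProduct.assoc K V V V).toLinearMap)

variable {V}

/-- The image of `L ⊗ V` in `V ⊗ V`, for a subspace `L ≤ V`. -/
def lT (L : Submodule K V) : Submodule K (V ⊗[K] V) :=
  LinearMap.range (rTensor V L.subtype)

/-- The image of `V ⊗ L` in `V ⊗ V`, for a subspace `L ≤ V`. -/
def rT (L : Submodule K V) : Submodule K (V ⊗[K] V) :=
  LinearMap.range (lTensor V L.subtype)

/-- `L` is a pre-categorical subspace of `(V, c)`: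
`c (L⊗V + V⊗L) ⊆ L⊗V + V⊗L`. -/
def IsPreCategorical (c : V ⊗[K] V →ₗ[K] V ⊗[K] V) (L : Submodule K V) : Prop :=
  Submodule.map c (lT K L ⊔ rT K L) ≤ lT K L ⊔ rT K L

/-- `L` is a categorical subspace of `(V, c)`:
`c (L⊗V) ⊆ V⊗L` and `c (V⊗L) ⊆ L⊗V`. -/
def IsCategorical (c : V ⊗[K] V →ₗ[K] V ⊗[K] V) (L : Submodule K V) : Prop :=
  Submodule.map c (lT K L) ≤ rT K L ∧ Submodule.map c (rT K L) ≤ lT K L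

/-- A morphism of braided vector spaces `f : (V, cV) → (W, cW)`:
`cW ∘ (f ⊗ f) = (f ⊗ f) ∘ cV`. -/
def IsBraidedHom {W : Type*} [AddCommGroup W] [Module K W]
    (cV : V ⊗[K] V →ₗ[K] V ⊗[K] V) (cW : W ⊗[K] W →ₗ[K] W ⊗[K] W)
    (f : V →ₗ[K] W) : Prop :=
  cW ∘ₗ TensorProduct.map f f = TensorProduct.map f f ∘ₗ cV

end BraidedDefs

/-- A braided bialgebra `(B, m, u, Δ, ε, c)` over `K`, with all structure maps
given as `K`-linear maps. -/
structure BB (B : Type*) [AddCommGroup B] [Module K B] where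
  /-- multiplication -/
  mul : B ⊗[K] B →ₗ[K] B
  /-- unit -/
  unit : K →ₗ[K] B
  /-- comultiplication -/
  comul : B →ₗ[K] B ⊗[K] B
  /-- counit -/
  counit : B →ₗ[K] K
  /-- braiding -/
  braid : B ⊗[K] B →ₗ[K] B ⊗[K] B
  mul_assoc' : mul ∘ₗ rTensor B mul
      = mul ∘ₗ lTensor B mul ∘ₗ (TensorProduct.assoc K B B B).toLinearMap
  one_mul' : ∀ b : B, mul (unit 1 ⊗ₜ[K] b) = b
  mul_one' : ∀ b : B, mul (b ⊗ₜ[K] unit 1) = b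
  coassoc' : rTensor B comul ∘ₗ comul
      = (TensorProduct.assoc K B B B).symm.toLinearMap ∘ₗ lTensor B comul ∘ₗ comul
  counit_comul' : (TensorProduct.lid K B).toLinearMap ∘ₗ rTensor B counit ∘ₗ comul
      = LinearMap.id
  comul_counit' : (TensorProduct.rid K B).toLinearMap ∘ₗ lTensor B counit ∘ₗ comul
      = LinearMap.id
  yang_baxter' : YangBaxter K B braid
  braid_mul_left : braid ∘ₗ rTensor B mul
      = lTensor B mul ∘ₗ (TensorProduct.assoc K B B B).toLinearMap
          ∘ₗ rTensor B braid ∘ₗ (TensorProduct.assoc K B B B).symm.toLinearMap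
          ∘ₗ lTensor B braid ∘ₗ (TensorProduct.assoc K B B B).toLinearMap
  braid_mul_right : braid ∘ₗ lTensor B mul
      = rTensor B mul ∘ₗ (TensorProduct.assoc K B B B).symm.toLinearMap
          ∘ₗ lTensor B braid ∘ₗ (TensorProduct.assoc K B B B).toLinearMap
          ∘ₗ rTensor B braid ∘ₗ (TensorProduct.assoc K B B B).symm.toLinearMap
  braid_unit_left : ∀ b : B, braid (unit 1 ⊗ₜ[K] b) = b ⊗ₜ[K] unit 1
  braid_unit_right : ∀ b : B, braid (b ⊗ₜ[K] unit 1) = unit 1 ⊗ₜ[K] b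
  comul_braid_left : rTensor B comul ∘ₗ braid
      = (TensorProduct.assoc K B B B).symm.toLinearMap ∘ₗ lTensor B braid
          ∘ₗ (TensorProduct.assoc K B B B).toLinearMap ∘ₗ rTensor B braid
          ∘ₗ (TensorProduct.assoc K B B B).symm.toLinearMap ∘ₗ lTensor B comul
  comul_braid_right : lTensor B comul ∘ₗ braid
      = (TensorProduct.assoc K B B B).toLinearMap ∘ₗ rTensor B braid
          ∘ₗ (TensorProduct.assoc K B B B).symm.toLinearMap ∘ₗ lTensor B braid
          ∘ₗ (TensorProduct.assoc K B B B).toLinearMap ∘ₗ rTensor B comul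
  counit_braid_left : (TensorProduct.lid K B).toLinearMap ∘ₗ rTensor B counit ∘ₗ braid
      = (TensorProduct.rid K B).toLinearMap ∘ₗ lTensor B counit
  counit_braid_right : (TensorProduct.rid K B).toLinearMap ∘ₗ lTensor B counit ∘ₗ braid
      = (TensorProduct.lid K B).toLinearMap ∘ₗ rTensor B counit
  comul_mul' : comul ∘ₗ mul
      = TensorProduct.map mul mul
          ∘ₗ (TensorProduct.assoc K (B ⊗[K] B) B B).toLinearMap
          ∘ₗ rTensor B ((TensorProduct.assoc K B B B).symm.toLinearMap)
          ∘ₗ rTensor B (lTensor B braid)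
          ∘ₗ rTensor B ((TensorProduct.assoc K B B B).toLinearMap)
          ∘ₗ (TensorProduct.assoc K (B ⊗[K] B) B B).symm.toLinearMap
          ∘ₗ TensorProduct.map comul comul

variable {B B' : Type*} [AddCommGroup B] [Module K B] [AddCommGroup B'] [Module K B']

/-- A morphism of braided bialgebras: an algebra map, a coalgebra map and a morphism
of braided vector spaces. -/
def IsBBHom (A : BB K B) (A' : BB K B') (f : B →ₗ[K] B') : Prop :=
  f ∘ₗ A.mul = A'.mul ∘ₗ TensorProduct.map f f ∧
  f ∘ₗ A.unit = A'.unit ∧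
  A'.comul ∘ₗ f = TensorProduct.map f f ∘ₗ A.comul ∧
  A'.counit ∘ₗ f = A.counit ∧
  A'.braid ∘ₗ TensorProduct.map f f = TensorProduct.map f f ∘ₗ A.braid

/-- The space of primitive elements `P(B) = {x : Δ x = x ⊗ 1 + 1 ⊗ x}`. -/
def Prim (A : BB K B) : Submodule K B :=
  LinearMap.ker (A.comul - (TensorProduct.mk K B B).flip (A.unit 1)
    - TensorProduct.mk K B B (A.unit 1))

/-- The product `M · N` of two subspaces of a braided bialgebra `B`. -/
def mulSub (A : BB K B) (M N : Submodule K B) : Submodule K B :=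
  Submodule.map A.mul (LinearMap.range (TensorProduct.map M.subtype N.subtype))

/-- Iterated powers of a subspace `V` in `B`: `V^{·0} = K·1`, `V^{·(n+1)} = V^{·n} · V`. -/
def powSub (A : BB K B) (V : Submodule K B) : ℕ → Submodule K B
  | 0 => LinearMap.range A.unit
  | (n+1) => mulSub K A (powSub A V n) V

/-- `V` generates `B` as a `K`-algebra. -/
def GeneratesAlgebra (A : BB K B) (V : Submodule K B) : Prop :=
  (⨆ n, powSub K A V n) = ⊤

/-- A braided ideal of a braided bialgebra: a two-sided ideal which is a coideal and a
pre-categorical subspace. -/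
def IsBraidedIdeal (A : BB K B) (I : Submodule K B) : Prop :=
  mulSub K A ⊤ I ≤ I ∧ mulSub K A I ⊤ ≤ I ∧
  Submodule.map A.comul I ≤ lT K I ⊔ rT K I ∧
  I ≤ LinearMap.ker A.counit ∧
  IsPreCategorical K A.braid I

/-- The two-sided ideal `B·S·B` of `B` generated by a subspace `S`. -/
def idealGen (A : BB K B) (S : Submodule K B) : Submodule K B :=
  mulSub K A (mulSub K A ⊤ S) ⊤

/-- `(B, γ)` is a `(V, c)`-bialgebra: `γ` is a morphism of braided vector spaces from
`(V, c)` to the infinitesimal part of `B`, and `γ(V)` generates `B` as a `K`-algebra. -/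
def IsVCBialgebra {V : Type*} [AddCommGroup V] [Module K V]
    (c : V ⊗[K] V →ₗ[K] V ⊗[K] V) (A : BB K B) (γ : V →ₗ[K] B) : Prop :=
  LinearMap.range γ ≤ Prim K A ∧
  A.braid ∘ₗ TensorProduct.map γ γ = TensorProduct.map γ γ ∘ₗ c ∧
  GeneratesAlgebra K A (LinearMap.range γ)

attribute [local instance 100] LieRing.ofAssociativeRing

set_option synthInstance.maxHeartbeats 1000000
set_option maxHeartbeats 1600000

namespace MM16

section UPart

variable (L : Type*) [LieRing L] [LieAlgebra K L]

local notation "U" => UniversalEnvelopingAlgebra K L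
local notation "ιU" => (UniversalEnvelopingAlgebra.ι K : L →ₗ⁅K⁆ UniversalEnvelopingAlgebra K L)

/-- The generating subspace `K·1 + ι(L)` of the universal enveloping algebra. -/
def Efil : Submodule K U :=
  Submodule.span K ({1} ∪ Set.range (ιU : L → U))

lemma mem_Efil_iff {y : U} :
    y ∈ Efil K L ↔ y ∈ Submodule.span K (({1} : Set U) ∪ Set.range (ιU : L → U)) :=
  Iff.rfl

lemma one_mem_Efil : (1 : U) ∈ Efil K L :=
  Submodule.subset_span (Or.inl rfl)

lemma ι_mem_Efil (x : L) : ιU x ∈ Efil K L :=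
  Submodule.subset_span (Or.inr ⟨x, rfl⟩)

lemma one_mem_Efil_pow (n : ℕ) : (1 : U) ∈ Efil K L ^ n := by
  induction n with
  | zero =>
    rw [pow_zero, Submodule.one_eq_span]
    exact Submodule.subset_span rfl
  | succ n ih =>
    rw [pow_succ]
    simpa using Submodule.mul_mem_mul ih (one_mem_Efil K L)

lemma Efil_pow_le_succ (n : ℕ) : Efil K L ^ n ≤ Efil K L ^ (n + 1) := by
  intro v hv
  rw [pow_succ]
  simpa using Submodule.mul_mem_mul hv (one_mem_Efil K L)

lemma Efil_pow_mono {i j : ℕ} (h : i ≤ j) : Efil K L ^ i ≤ Efil K L ^ j := by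
  induction h with
  | refl => exact le_rfl
  | step _ ih => exact ih.trans (Efil_pow_le_succ K L _)

/-- The image of `M ⊗ N` inside `U ⊗ U`. -/
def TP (M N : Submodule K U) : Submodule K (U ⊗[K] U) :=
  LinearMap.range (TensorProduct.map M.subtype N.subtype)

lemma tmul_mem_TP {M N : Submodule K U} {a b : U} (ha : a ∈ M) (hb : b ∈ N) :
    a ⊗ₜ[K] b ∈ TP K L M N :=
  ⟨(⟨a, ha⟩ : M) ⊗ₜ[K] (⟨b, hb⟩ : N), by simp [TensorProduct.map_tmul]⟩

lemma TP_le {M N : Submodule K U} {Q : Submodule K (U ⊗[K] U)}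
    (h : ∀ a ∈ M, ∀ b ∈ N, a ⊗ₜ[K] b ∈ Q) : TP K L M N ≤ Q := by
  rw [TP, TensorProduct.range_map_eq_span_tmul]
  refine Submodule.span_le.2 ?_
  rintro t ⟨m, n, rfl⟩
  exact h _ m.2 _ n.2

lemma TP_mono {M N M' N' : Submodule K U} (h1 : M ≤ M') (h2 : N ≤ N') :
    TP K L M N ≤ TP K L M' N' :=
  TP_le K L fun a ha b hb => tmul_mem_TP K L (h1 ha) (h2 hb)

lemma mul_mem_TP {M N M' N' : Submodule K U} {z w : U ⊗[K] U}
    (hz : z ∈ TP K L M N) (hw : w ∈ TP K L M' N') :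
    z * w ∈ TP K L (M * M') (N * N') := by
  rw [TP, TensorProduct.range_map_eq_span_tmul] at hz hw
  induction hz using Submodule.span_induction with
  | mem z hz =>
    obtain ⟨a, b, rfl⟩ := hz
    induction hw using Submodule.span_induction with
    | mem w hw =>
      obtain ⟨c, d, rfl⟩ := hw
      rw [Algebra.TensorProduct.tmul_mul_tmul]
      exact tmul_mem_TP K L (Submodule.mul_mem_mul a.2 c.2) (Submodule.mul_mem_mul b.2 d.2)
    | zero => rw [mul_zero]; exact Submodule.zero_mem _
    | add w₁ w₂ _ _ h1 h2 => rw [mul_add]; exact Submodule.add_mem _ h1 h2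
    | smul c w _ h => rw [mul_smul_comm]; exact Submodule.smul_mem _ _ h
  | zero => rw [zero_mul]; exact Submodule.zero_mem _
  | add z₁ z₂ _ _ h1 h2 => rw [add_mul]; exact Submodule.add_mem _ h1 h2
  | smul c z _ h => rw [smul_mul_assoc]; exact Submodule.smul_mem _ _ h

/-- The filtration on `U ⊗ U`. -/
def Pfil (n : ℕ) : Submodule K (U ⊗[K] U) :=
  ⨆ (p : ℕ × ℕ) (_ : p.1 + p.2 ≤ n), TP K L (Efil K L ^ p.1) (Efil K L ^ p.2)

lemma TP_le_Pfil {i j n : ℕ} (h : i + j ≤ n) :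
    TP K L (Efil K L ^ i) (Efil K L ^ j) ≤ Pfil K L n :=
  le_iSup_of_le (i, j) (le_iSup_of_le h le_rfl)

lemma Pfil_le {n : ℕ} {Q : Submodule K (U ⊗[K] U)}
    (h : ∀ i j, i + j ≤ n → TP K L (Efil K L ^ i) (Efil K L ^ j) ≤ Q) :
    Pfil K L n ≤ Q :=
  iSup_le fun p => iSup_le fun hp => h p.1 p.2 hp

lemma Pfil_mul_Pfil {n m : ℕ} {z w : U ⊗[K] U} (hz : z ∈ Pfil K L n) (hw : w ∈ Pfil K L m) :
    z * w ∈ Pfil K L (n + m) := by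
  have key : Pfil K L n * Pfil K L m ≤ Pfil K L (n + m) := by
    show (⨆ (p : ℕ × ℕ) (_ : p.1 + p.2 ≤ n), TP K L (Efil K L ^ p.1) (Efil K L ^ p.2))
        * (⨆ (q : ℕ × ℕ) (_ : q.1 + q.2 ≤ m), TP K L (Efil K L ^ q.1) (Efil K L ^ q.2))
      ≤ Pfil K L (n + m)
    simp only [Submodule.iSup_mul, Submodule.mul_iSup]
    refine iSup_le fun p => iSup_le fun hp => iSup_le fun q => iSup_le fun hq => ?_
    refine Submodule.mul_le.2 fun a ha b hb => ?_
    have := mul_mem_TP K L ha hb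
    rw [← pow_add, ← pow_add] at this
    exact TP_le_Pfil K L (by omega) this
  exact key (Submodule.mul_mem_mul hz hw)

/-- The comultiplication generator: `x ↦ ι x ⊗ 1 + 1 ⊗ ι x`, as a Lie algebra map. -/
def delta0 : L →ₗ⁅K⁆ U ⊗[K] U where
  toLinearMap :=
    ((TensorProduct.mk K U U).flip 1).comp (ιU : L →ₗ⁅K⁆ U).toLinearMap +
      (TensorProduct.mk K U U 1).comp (ιU : L →ₗ⁅K⁆ U).toLinearMap
  map_lie' := by
    intro x y
    have h : ιU ⁅x, y⁆ = ιU x * ιU y - ιU y * ιU x := by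
      rw [LieHom.map_lie, Ring.lie_def]
    simp only [LinearMap.toFun_eq_coe, LinearMap.add_apply, LinearMap.coe_comp,
      Function.comp_apply,
      LieHom.coe_toLinearMap, TensorProduct.mk_apply, LinearMap.flip_apply, Ring.lie_def, h,
      TensorProduct.sub_tmul, TensorProduct.tmul_sub, add_mul, mul_add,
      Algebra.TensorProduct.tmul_mul_tmul, one_mul, mul_one]
    abel

lemma delta0_apply (x : L) : delta0 K L x = ιU x ⊗ₜ[K] 1 + 1 ⊗ₜ[K] ιU x := rfl

/-- The comultiplication of `U` as an algebra map. -/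
def ΔU : U →ₐ[K] U ⊗[K] U := UniversalEnvelopingAlgebra.lift K (delta0 K L)

lemma ΔU_ι (x : L) : ΔU K L (ιU x) = ιU x ⊗ₜ[K] 1 + 1 ⊗ₜ[K] ιU x := by
  rw [ΔU, UniversalEnvelopingAlgebra.lift_ι_apply, delta0_apply]

/-- The counit of `U` as an algebra map. -/
def εU : U →ₐ[K] K :=
  UniversalEnvelopingAlgebra.lift K
    ({ toLinearMap := (0 : L →ₗ[K] K), map_lie' := by intro x y; simp } : L →ₗ⁅K⁆ K)

lemma εU_ι (x : L) : εU K L (ιU x) = 0 := by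
  rw [εU, UniversalEnvelopingAlgebra.lift_ι_apply]; rfl

/-- Helper: `Algebra.TensorProduct.map` agrees with `TensorProduct.map`. -/
lemma algMap_eq {A B C D : Type*} [Ring A] [Ring B] [Ring C] [Ring D]
    [Algebra K A] [Algebra K B] [Algebra K C] [Algebra K D]
    (f : A →ₐ[K] B) (g : C →ₐ[K] D) (t : A ⊗[K] C) :
    Algebra.TensorProduct.map f g t = TensorProduct.map f.toLinearMap g.toLinearMap t := by
  induction t with
  | zero => simp
  | tmul a c => simp [Algebra.TensorProduct.map_tmul, TensorProduct.map_tmul]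
  | add x y hx hy => simp [map_add, hx, hy]

/-- The "scalar part" linear map `u ↦ ε(u) • 1`. -/
def θU : U →ₗ[K] U := (Algebra.linearMap K U).comp (εU K L).toLinearMap

lemma θU_apply (u : U) : θU K L u = εU K L u • 1 := by
  simp [θU, Algebra.algebraMap_eq_smul_one]

lemma map_θ_id_ΔU (u : U) :
    TensorProduct.map (θU K L) LinearMap.id (ΔU K L u) = 1 ⊗ₜ[K] u := by
  have hAlg : (Algebra.TensorProduct.map ((Algebra.ofId K U).comp (εU K L))
        (AlgHom.id K U)).comp (ΔU K L) = Algebra.TensorProduct.includeRight := by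
    refine UniversalEnvelopingAlgebra.hom_ext K (LieHom.ext fun x => ?_)
    simp only [LieHom.coe_comp, Function.comp_apply, AlgHom.coe_toLieHom, AlgHom.coe_comp]
    rw [ΔU_ι, map_add, Algebra.TensorProduct.map_tmul, Algebra.TensorProduct.map_tmul]
    simp only [AlgHom.coe_comp, Function.comp_apply, AlgHom.coe_id, id_eq, εU_ι, map_zero,
      map_one, TensorProduct.zero_tmul, TensorProduct.tmul_zero, zero_add, add_zero,
      Algebra.TensorProduct.includeRight_apply, Algebra.TensorProduct.includeLeft_apply]
  rw [show θU K L = ((Algebra.ofId K U).comp (εU K L)).toLinearMap from rfl,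
    show (LinearMap.id : U →ₗ[K] U) = (AlgHom.id K U).toLinearMap from rfl,
    ← algMap_eq, ← AlgHom.comp_apply, hAlg, Algebra.TensorProduct.includeRight_apply]

lemma map_id_θ_ΔU (u : U) :
    TensorProduct.map LinearMap.id (θU K L) (ΔU K L u) = u ⊗ₜ[K] 1 := by
  have hAlg : (Algebra.TensorProduct.map (AlgHom.id K U)
        ((Algebra.ofId K U).comp (εU K L))).comp (ΔU K L)
      = Algebra.TensorProduct.includeLeft := by
    refine UniversalEnvelopingAlgebra.hom_ext K (LieHom.ext fun x => ?_)
    simp only [LieHom.coe_comp, Function.comp_apply, AlgHom.coe_toLieHom, AlgHom.coe_comp]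
    rw [ΔU_ι, map_add, Algebra.TensorProduct.map_tmul, Algebra.TensorProduct.map_tmul]
    simp only [AlgHom.coe_comp, Function.comp_apply, AlgHom.coe_id, id_eq, εU_ι, map_zero,
      map_one, TensorProduct.zero_tmul, TensorProduct.tmul_zero, zero_add, add_zero,
      Algebra.TensorProduct.includeRight_apply, Algebra.TensorProduct.includeLeft_apply]
  rw [show θU K L = ((Algebra.ofId K U).comp (εU K L)).toLinearMap from rfl,
    show (LinearMap.id : U →ₗ[K] U) = (AlgHom.id K U).toLinearMap from rfl,
    ← algMap_eq, ← AlgHom.comp_apply, hAlg, Algebra.TensorProduct.includeLeft_apply]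

/-- Pointwise expansion of `(ν ⊗ ν)` where `ν = id - θ`. -/
lemma map_nu_nu (t : U ⊗[K] U) :
    TensorProduct.map (LinearMap.id - θU K L) (LinearMap.id - θU K L) t
      = t - TensorProduct.map (θU K L) LinearMap.id t
        - TensorProduct.map LinearMap.id (θU K L) t
        + TensorProduct.map (θU K L) (θU K L) t := by
  induction t with
  | zero => simp
  | tmul a b =>
    simp only [TensorProduct.map_tmul, LinearMap.sub_apply, LinearMap.id_apply,
      TensorProduct.sub_tmul, TensorProduct.tmul_sub]
    abel
  | add x y hx hy =>
    simp only [map_add, hx, hy]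
    abel

/-- Lemma D: `Δ` respects the filtration. -/
lemma ΔU_mem_Pfil : ∀ n : ℕ, ∀ u ∈ Efil K L ^ n, ΔU K L u ∈ Pfil K L n := by
  have hE : ∀ y ∈ Efil K L, ΔU K L y ∈ Pfil K L 1 := by
    intro y hy
    rw [mem_Efil_iff] at hy
    induction hy using Submodule.span_induction with
    | mem y hy =>
      rcases hy with hy | ⟨x, rfl⟩
      · rcases hy with rfl
        rw [map_one]
        exact TP_le_Pfil K L (by omega)
          (tmul_mem_TP K L (one_mem_Efil_pow K L 0) (one_mem_Efil_pow K L 0))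
      · rw [ΔU_ι]
        refine Submodule.add_mem _ ?_ ?_
        · exact TP_le_Pfil K L (i := 1) (j := 0) (by omega)
            (tmul_mem_TP K L (by simpa [pow_one] using ι_mem_Efil K L x)
              (one_mem_Efil_pow K L 0))
        · exact TP_le_Pfil K L (i := 0) (j := 1) (by omega)
            (tmul_mem_TP K L (one_mem_Efil_pow K L 0)
              (by simpa [pow_one] using ι_mem_Efil K L x))
    | zero => simp only [map_zero]; exact Submodule.zero_mem _
    | add y z _ _ h1 h2 => rw [map_add]; exact Submodule.add_mem _ h1 h2
    | smul c y _ h => rw [map_smul]; exact Submodule.smul_mem _ _ h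
  intro n
  induction n with
  | zero =>
    intro u hu
    rw [pow_zero, Submodule.one_eq_span] at hu
    obtain ⟨c, rfl⟩ := Submodule.mem_span_singleton.1 hu
    rw [map_smul, map_one]
    exact Submodule.smul_mem _ _ (TP_le_Pfil K L (i := 0) (j := 0) (by omega)
      (tmul_mem_TP K L (one_mem_Efil_pow K L 0) (one_mem_Efil_pow K L 0)))
  | succ n ih =>
    intro u hu
    rw [pow_succ] at hu
    refine Submodule.mul_induction_on hu (fun v hv y hy => ?_) (fun x y hx hy => ?_)
    · rw [map_mul]
      exact Pfil_mul_Pfil K L (ih v hv) (hE y hy)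
    · rw [map_add]; exact Submodule.add_mem _ hx hy

/-- Lemma C: commutator with a generator preserves the filtration. -/
lemma comm_mem_Efil_pow (x : L) :
    ∀ n : ℕ, ∀ b ∈ Efil K L ^ n, ιU x * b - b * ιU x ∈ Efil K L ^ n := by
  have hE : ∀ y ∈ Efil K L, ιU x * y - y * ιU x ∈ Efil K L := by
    intro y hy
    rw [mem_Efil_iff] at hy
    induction hy using Submodule.span_induction with
    | mem y hy =>
      rcases hy with hy | ⟨z, rfl⟩
      · rcases hy with rfl; simp
      · have : ιU x * ιU z - ιU z * ιU x = ιU ⁅x, z⁆ := by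
          rw [LieHom.map_lie, Ring.lie_def]
        rw [this]
        exact ι_mem_Efil K L _
    | zero => simp
    | add y z _ _ h1 h2 =>
      have : ιU x * (y + z) - (y + z) * ιU x = (ιU x * y - y * ιU x) + (ιU x * z - z * ιU x) := by
        noncomm_ring
      rw [this]; exact Submodule.add_mem _ h1 h2
    | smul c y _ h =>
      have : ιU x * (c • y) - (c • y) * ιU x = c • (ιU x * y - y * ιU x) := by
        rw [mul_smul_comm, smul_mul_assoc, smul_sub]
      rw [this]; exact Submodule.smul_mem _ _ h
  intro n
  induction n with
  | zero =>
    intro b hb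
    rw [pow_zero, Submodule.one_eq_span] at hb
    obtain ⟨c, rfl⟩ := Submodule.mem_span_singleton.1 hb
    have : ιU x * (c • 1) - (c • 1) * ιU x = 0 := by
      rw [mul_smul_comm, smul_mul_assoc, mul_one, one_mul, sub_self]
    rw [this]
    exact Submodule.zero_mem _
  | succ n ih =>
    intro b hb
    rw [pow_succ] at hb
    refine Submodule.mul_induction_on hb (fun v hv y hy => ?_) (fun a b h1 h2 => ?_)
    · have : ιU x * (v * y) - (v * y) * ιU x
          = (ιU x * v - v * ιU x) * y + v * (ιU x * y - y * ιU x) := by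
        noncomm_ring
      rw [this, pow_succ]
      exact Submodule.add_mem _ (Submodule.mul_mem_mul (ih v hv) hy)
        (Submodule.mul_mem_mul hv (hE y hy))
    · have : ιU x * (a + b) - (a + b) * ιU x
          = (ιU x * a - a * ιU x) + (ιU x * b - b * ιU x) := by noncomm_ring
      rw [this]; exact Submodule.add_mem _ h1 h2

/-- The multiplication map. -/
local notation "μU" => LinearMap.mul' K (UniversalEnvelopingAlgebra K L)

lemma mul'_mul_one_tmul (c : U) (z : U ⊗[K] U) :
    μU (z * (1 ⊗ₜ[K] c)) = μU z * c := by
  induction z with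
  | zero => simp
  | tmul a b => simp [Algebra.TensorProduct.tmul_mul_tmul, LinearMap.mul'_apply, mul_assoc]
  | add x y hx hy => rw [add_mul, map_add, map_add, hx, hy, add_mul]

/-- Bound for the commutator defect. -/
lemma gbound (x : L) (n : ℕ) :
    ∀ z ∈ Pfil K L n,
      μU (z * (ιU x ⊗ₜ[K] 1)) - μU (z * (1 ⊗ₜ[K] ιU x)) ∈ Efil K L ^ n := by
  intro z hz
  have hlin : z ∈ Pfil K L n → (μU ∘ₗ LinearMap.mulRight K ((ιU x : U) ⊗ₜ[K] 1)
      - μU ∘ₗ LinearMap.mulRight K ((1 : U) ⊗ₜ[K] (ιU x : U))) z ∈ Efil K L ^ n := by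
    intro hz
    refine Pfil_le K L (Q := Submodule.comap _ (Efil K L ^ n)) (fun i j hij => ?_) hz
    refine TP_le K L fun a ha b hb => ?_
    simp only [Submodule.mem_comap, LinearMap.sub_apply, LinearMap.coe_comp,
      Function.comp_apply, LinearMap.mulRight_apply]
    have h1 : (a ⊗ₜ[K] b) * ((ιU x : U) ⊗ₜ[K] 1) = (a * ιU x) ⊗ₜ[K] b := by
      rw [Algebra.TensorProduct.tmul_mul_tmul, mul_one]
    have h2 : (a ⊗ₜ[K] b) * ((1 : U) ⊗ₜ[K] (ιU x : U)) = a ⊗ₜ[K] (b * ιU x) := by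
      rw [Algebra.TensorProduct.tmul_mul_tmul, mul_one]
    rw [h1, h2, LinearMap.mul'_apply, LinearMap.mul'_apply]
    have : a * ιU x * b - a * (b * ιU x) = a * (ιU x * b - b * ιU x) := by noncomm_ring
    rw [this]
    have hmem : a * (ιU x * b - b * ιU x) ∈ Efil K L ^ (i + j) := by
      rw [pow_add]
      exact Submodule.mul_mem_mul ha (comm_mem_Efil_pow K L x j b hb)
    exact Efil_pow_mono K L hij hmem
  simpa using hlin hz
/-- `Epre n`: the "previous" filtration level, with `Epre 0 = ⊥`. -/
def Epre : ℕ → Submodule K U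
  | 0 => ⊥
  | n + 1 => Efil K L ^ n

lemma Epre_le (n : ℕ) : Epre K L n ≤ Efil K L ^ n := by
  cases n with
  | zero => exact bot_le
  | succ n => exact Efil_pow_le_succ K L n

lemma Epre_mul_le (n : ℕ) : ∀ w ∈ Epre K L n, ∀ y ∈ Efil K L, w * y ∈ Efil K L ^ n := by
  intro w hw y hy
  cases n with
  | zero => simp only [Epre, Submodule.mem_bot] at hw; simp [hw]
  | succ n => rw [pow_succ]; exact Submodule.mul_mem_mul hw hy

/-- Lemma B: the squaring operator `μ ∘ Δ` acts as `2^n` on `gr^n`. -/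
lemma sq_filtration : ∀ n : ℕ, ∀ w ∈ Efil K L ^ n,
    μU (ΔU K L w) - ((2 : K) ^ n) • w ∈ Epre K L n := by
  intro n
  induction n with
  | zero =>
    intro w hw
    rw [pow_zero, Submodule.one_eq_span] at hw
    obtain ⟨c, rfl⟩ := Submodule.mem_span_singleton.1 hw
    have : ΔU K L ((c : K) • (1 : U)) = c • (1 ⊗ₜ[K] 1 : U ⊗[K] U) := by
      rw [map_smul, map_one]; rfl
    rw [this, map_smul, LinearMap.mul'_apply, one_mul, pow_zero, one_smul, sub_self]
    exact Submodule.zero_mem _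
  | succ n ih =>
    intro w hw
    rw [pow_succ] at hw
    have hadd : ∀ a b : U,
        μU (ΔU K L a) - ((2 : K) ^ (n + 1)) • a ∈ Epre K L (n + 1) →
        μU (ΔU K L b) - ((2 : K) ^ (n + 1)) • b ∈ Epre K L (n + 1) →
        μU (ΔU K L (a + b)) - ((2 : K) ^ (n + 1)) • (a + b) ∈ Epre K L (n + 1) := by
      intro a b h1 h2
      have : μU (ΔU K L (a + b)) - ((2 : K) ^ (n + 1)) • (a + b)
          = (μU (ΔU K L a) - ((2 : K) ^ (n + 1)) • a)
            + (μU (ΔU K L b) - ((2 : K) ^ (n + 1)) • b) := by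
        rw [map_add, map_add, smul_add]; abel
      rw [this]; exact Submodule.add_mem _ h1 h2
    refine Submodule.mul_induction_on hw (fun v hv y hy => ?_) hadd
    -- inner induction over y ∈ Efil
    rw [mem_Efil_iff] at hy
    induction hy using Submodule.span_induction with
      | mem y hy =>
        rcases hy with hy | ⟨x, rfl⟩
        · -- y = 1
          rcases hy with rfl
          rw [mul_one]
          have h1 : μU (ΔU K L v) - ((2 : K) ^ n) • v ∈ Efil K L ^ n :=
            (Epre_le K L n) (ih v hv)
          have h2 : ((2 : K) ^ n) • v ∈ Efil K L ^ n := Submodule.smul_mem _ _ hv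
          have h3 : μU (ΔU K L v) - ((2 : K) ^ (n + 1)) • v
              = (μU (ΔU K L v) - ((2 : K) ^ n) • v) - ((2 : K) ^ n) • v := by
            rw [pow_succ, mul_comm, mul_smul, two_smul]
            abel
          rw [h3]
          exact Submodule.sub_mem _ h1 h2
        · -- y = ι x
          have hΔ : ΔU K L (v * ιU x)
              = ΔU K L v * (ιU x ⊗ₜ[K] 1) + ΔU K L v * (1 ⊗ₜ[K] ιU x) := by
            rw [map_mul, ΔU_ι, mul_add]
          have hs : μU (ΔU K L v * (ιU x ⊗ₜ[K] 1)) - μU (ΔU K L v * (1 ⊗ₜ[K] ιU x))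
              ∈ Efil K L ^ n :=
            gbound K L x n _ (ΔU_mem_Pfil K L n v hv)
          have hμ : μU (ΔU K L (v * ιU x))
              = (μU (ΔU K L v * (ιU x ⊗ₜ[K] 1)) - μU (ΔU K L v * (1 ⊗ₜ[K] ιU x)))
                + (2 : K) • (μU (ΔU K L v) * ιU x) := by
            rw [hΔ, map_add, mul'_mul_one_tmul, two_smul]
            abel
          have hrw : μU (ΔU K L (v * ιU x)) - ((2 : K) ^ (n + 1)) • (v * ιU x)
              = (μU (ΔU K L v * (ιU x ⊗ₜ[K] 1)) - μU (ΔU K L v * (1 ⊗ₜ[K] ιU x)))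
                + (2 : K) • ((μU (ΔU K L v) - ((2 : K) ^ n) • v) * ιU x) := by
            rw [hμ, sub_mul, smul_mul_assoc, smul_sub, smul_smul, ← pow_succ']
            abel
          rw [hrw]
          refine Submodule.add_mem _ hs (Submodule.smul_mem _ _ ?_)
          exact Epre_mul_le K L n _ (ih v hv) _ (ι_mem_Efil K L x)
      | zero => simp only [mul_zero, map_zero, smul_zero, sub_self]; exact Submodule.zero_mem _
      | add y z hymem hzmem h1 h2 =>
        have : μU (ΔU K L (v * (y + z))) - ((2 : K) ^ (n + 1)) • (v * (y + z))
            = (μU (ΔU K L (v * y)) - ((2 : K) ^ (n + 1)) • (v * y))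
              + (μU (ΔU K L (v * z)) - ((2 : K) ^ (n + 1)) • (v * z)) := by
          rw [mul_add, map_add, map_add, smul_add]; abel
        rw [this]; exact Submodule.add_mem _ h1 h2
      | smul c y hymem h1 =>
        have : μU (ΔU K L (v * (c • y))) - ((2 : K) ^ (n + 1)) • (v * (c • y))
            = c • (μU (ΔU K L (v * y)) - ((2 : K) ^ (n + 1)) • (v * y)) := by
          rw [mul_smul_comm, map_smul, map_smul, smul_sub, smul_comm]
        rw [this]; exact Submodule.smul_mem _ _ h1

/-- Lemma E: the reduced coproduct drops the filtration level. -/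
lemma reduced_comul_mem (n : ℕ) (u : U) (hu : u ∈ Efil K L ^ (n + 1)) (hε : εU K L u = 0) :
    ΔU K L u - u ⊗ₜ[K] 1 - 1 ⊗ₜ[K] u ∈ TP K L (Efil K L ^ n) (Efil K L ^ n) := by
  set ν : U →ₗ[K] U := LinearMap.id - θU K L with hν
  have hmain : TensorProduct.map ν ν (ΔU K L u) = ΔU K L u - u ⊗ₜ[K] 1 - 1 ⊗ₜ[K] u := by
    have hθθ : TensorProduct.map (θU K L) (θU K L) (ΔU K L u) = 0 := by
      have hcomp : TensorProduct.map (θU K L) (θU K L)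
          = (TensorProduct.map (θU K L) LinearMap.id) ∘ₗ
              (TensorProduct.map LinearMap.id (θU K L)) := by
        rw [← TensorProduct.map_comp, LinearMap.comp_id, LinearMap.id_comp]
      rw [hcomp, LinearMap.comp_apply, map_id_θ_ΔU, TensorProduct.map_tmul, θU_apply, hε,
        zero_smul, TensorProduct.zero_tmul]
    rw [map_nu_nu, map_θ_id_ΔU, map_id_θ_ΔU, hθθ, add_zero]
    abel
  have hbound : TensorProduct.map ν ν (ΔU K L u)
      ∈ TP K L (Efil K L ^ n) (Efil K L ^ n) := by
    have hP : ΔU K L u ∈ Pfil K L (n + 1) := ΔU_mem_Pfil K L (n + 1) u hu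
    have hν_mem : ∀ i : ℕ, ∀ a ∈ Efil K L ^ i, ν a ∈ Efil K L ^ i := by
      intro i a ha
      simp only [hν, LinearMap.sub_apply, LinearMap.id_apply]
      exact Submodule.sub_mem _ ha (by
        rw [θU_apply]
        exact Submodule.smul_mem _ _ (one_mem_Efil_pow K L i))
    have hν_zero : ∀ a ∈ Efil K L ^ 0, ν a = 0 := by
      intro a ha
      rw [pow_zero, Submodule.one_eq_span] at ha
      obtain ⟨c, rfl⟩ := Submodule.mem_span_singleton.1 ha
      have hεc : εU K L ((c : K) • (1 : U)) = c := by
        rw [map_smul, map_one, smul_eq_mul, mul_one]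
      simp only [hν, LinearMap.sub_apply, LinearMap.id_apply, θU_apply, hεc, sub_self]
    refine Pfil_le K L (Q := Submodule.comap (TensorProduct.map ν ν)
        (TP K L (Efil K L ^ n) (Efil K L ^ n))) (fun i j hij => ?_) hP
    refine TP_le K L fun a ha b hb => ?_
    simp only [Submodule.mem_comap, TensorProduct.map_tmul]
    rcases Nat.eq_zero_or_pos i with hi | hi
    · subst hi
      rw [hν_zero a ha, TensorProduct.zero_tmul]
      exact Submodule.zero_mem _
    rcases Nat.eq_zero_or_pos j with hj | hj
    · subst hj
      rw [hν_zero b hb, TensorProduct.tmul_zero]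
      exact Submodule.zero_mem _
    exact tmul_mem_TP K L
      (Efil_pow_mono K L (by omega) (hν_mem i a ha))
      (Efil_pow_mono K L (by omega) (hν_mem j b hb))
  rw [← hmain]
  exact hbound
/-- The subalgebra of elements in some filtration level. -/
def genSub : Subalgebra K U where
  carrier := { w : U | ∃ n : ℕ, w ∈ Efil K L ^ n }
  mul_mem' := by
    rintro a b ⟨n, hn⟩ ⟨m, hm⟩
    exact ⟨n + m, by rw [pow_add]; exact Submodule.mul_mem_mul hn hm⟩
  add_mem' := by
    rintro a b ⟨n, hn⟩ ⟨m, hm⟩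
    exact ⟨n + m, Submodule.add_mem _
      (Efil_pow_mono K L (Nat.le_add_right n m) hn)
      (Efil_pow_mono K L (Nat.le_add_left m n) hm)⟩
  algebraMap_mem' := by
    intro c
    exact ⟨0, by
      rw [Algebra.algebraMap_eq_smul_one]
      exact Submodule.smul_mem _ _ (one_mem_Efil_pow K L 0)⟩

set_option maxHeartbeats 1000000 in
/-- Every element of `U` lies in some filtration level. -/
lemma exists_mem_Efil_pow (w : U) : ∃ n : ℕ, w ∈ Efil K L ^ n := by
  set S : Subalgebra K U := genSub K L with hS
  have hι : ∀ x : L, (ιU x : U) ∈ S := fun x => ⟨1, by simpa [pow_one] using ι_mem_Efil K L x⟩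
  -- lift into S
  let ι' : L →ₗ⁅K⁆ S :=
    { toFun := fun x => ⟨ιU x, hι x⟩
      map_add' := fun x y => Subtype.ext (map_add (UniversalEnvelopingAlgebra.ι K) x y)
      map_smul' := fun c x => Subtype.ext (map_smul (UniversalEnvelopingAlgebra.ι K) c x)
      map_lie' := by
        intro x y
        refine Subtype.ext ?_
        change (ιU ⁅x, y⁆ : U) = ιU x * ιU y - ιU y * ιU x
        rw [LieHom.map_lie, Ring.lie_def] }
  let g : UniversalEnvelopingAlgebra K L →ₐ[K] S := UniversalEnvelopingAlgebra.lift K ι'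
  have hval : (S.val.comp g) = AlgHom.id K U := by
    refine UniversalEnvelopingAlgebra.hom_ext K (LieHom.ext fun x => ?_)
    show S.val (g ((UniversalEnvelopingAlgebra.ι K) x)) = (UniversalEnvelopingAlgebra.ι K) x
    rw [show g (ιU x) = ι' x from UniversalEnvelopingAlgebra.lift_ι_apply K ι' x]
    rfl
  have : w = ((g w : S) : U) := by
    conv_lhs => rw [← AlgHom.id_apply (R := K) w, ← hval]
    rfl
  rw [this]
  exact (g w).2

end UPart

section APart

variable {A : Type*} [CharZero K] [Ring A] [Bialgebra K A]
variable (Lie : LieSubalgebra K A)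
variable (hLie : (Lie : Set A) = {x : A | Coalgebra.comul (R := K) x = x ⊗ₜ[K] 1 + 1 ⊗ₜ[K] x})

local notation "U" => UniversalEnvelopingAlgebra K Lie
local notation "ιU" => (UniversalEnvelopingAlgebra.ι K : Lie →ₗ⁅K⁆ UniversalEnvelopingAlgebra K Lie)
local notation "μU" => LinearMap.mul' K (UniversalEnvelopingAlgebra K Lie)

local notation "fA" => UniversalEnvelopingAlgebra.lift K Lie.incl

include hLie

lemma prim_of_mem {x : A} (hx : x ∈ Lie) :
    Coalgebra.comul (R := K) x = x ⊗ₜ[K] 1 + 1 ⊗ₜ[K] x := by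
  have : x ∈ (Lie : Set A) := hx
  rw [hLie] at this
  exact this

lemma counit_prim {x : A} (hx : x ∈ Lie) : Coalgebra.counit (R := K) x = 0 := by
  have h := Coalgebra.rTensor_counit_comul (R := K) x
  rw [prim_of_mem K Lie hLie hx] at h
  have h2 := congrArg (TensorProduct.lid K A) h
  simp only [map_add, LinearMap.rTensor_tmul, TensorProduct.lid_tmul] at h2
  -- h2 : counit x • 1 + counit 1 • x = x
  rw [Bialgebra.counit_one, one_smul] at h2
  have h3 : (Coalgebra.counit (R := K) x) • (1 : A) = 0 := by
    have h2' := h2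
    have : (Coalgebra.counit (R := K) x) • (1 : A) + x - x = x - x := by rw [h2']
    simpa using this
  have h4 := congrArg (Bialgebra.counitAlgHom K A) h3
  simpa using h4

lemma counit_f (u : U) : Bialgebra.counitAlgHom K A (fA u) = εU K Lie u := by
  have : (Bialgebra.counitAlgHom K A).comp fA = εU K Lie := by
    refine UniversalEnvelopingAlgebra.hom_ext K (LieHom.ext fun x => ?_)
    simp only [LieHom.coe_comp, Function.comp_apply, AlgHom.coe_toLieHom, AlgHom.coe_comp]
    rw [UniversalEnvelopingAlgebra.lift_ι_apply, εU_ι]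
    exact counit_prim K Lie hLie x.2
  exact AlgHom.congr_fun this u

lemma comul_f (u : U) :
    Coalgebra.comul (R := K) (fA u)
      = TensorProduct.map (fA).toLinearMap (fA).toLinearMap (ΔU K Lie u) := by
  have : (Bialgebra.comulAlgHom K A).comp fA
      = (Algebra.TensorProduct.map fA fA).comp (ΔU K Lie) := by
    refine UniversalEnvelopingAlgebra.hom_ext K (LieHom.ext fun x => ?_)
    simp only [LieHom.coe_comp, Function.comp_apply, AlgHom.coe_toLieHom, AlgHom.coe_comp]
    rw [UniversalEnvelopingAlgebra.lift_ι_apply, ΔU_ι, map_add,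
      Algebra.TensorProduct.map_tmul, Algebra.TensorProduct.map_tmul,
      Bialgebra.comulAlgHom_apply]
    rw [UniversalEnvelopingAlgebra.lift_ι_apply, map_one]
    exact prim_of_mem K Lie hLie x.2
  have happ := AlgHom.congr_fun this u
  simp only [AlgHom.coe_comp, Function.comp_apply] at happ
  rw [show (Bialgebra.comulAlgHom K A) (fA u) = Coalgebra.comul (R := K) (fA u) from rfl]
    at happ
  rw [happ, algMap_eq]

lemma f_injective_on_pow :
    ∀ n : ℕ, ∀ u ∈ Efil K Lie ^ n, fA u = 0 → u = 0 := by
  intro n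
  induction n with
  | zero =>
    intro u hu hfu
    rw [pow_zero, Submodule.one_eq_span] at hu
    obtain ⟨c, rfl⟩ := Submodule.mem_span_singleton.1 hu
    have h1 : εU K Lie ((c : K) • (1 : U)) = c := by
      rw [map_smul, map_one, smul_eq_mul, mul_one]
    have h2 : εU K Lie ((c : K) • (1 : U)) = 0 := by
      rw [← counit_f K Lie hLie, hfu, map_zero]
    rw [h1] at h2
    rw [h2, zero_smul]
  | succ n ih =>
    intro u hu hfu
    have hε : εU K Lie u = 0 := by
      rw [← counit_f K Lie hLie, hfu, map_zero]
    cases n with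
    | zero =>
      -- u ∈ Efil, the base of the filtration
      rw [pow_one, mem_Efil_iff, Submodule.span_union] at hu
      have hrange : Submodule.span K (Set.range (ιU : Lie → U))
          = LinearMap.range (ιU : Lie →ₗ⁅K⁆ U).toLinearMap := by
        have h0 := Submodule.span_eq (LinearMap.range (ιU : Lie →ₗ⁅K⁆ U).toLinearMap)
        rwa [LinearMap.coe_range, LieHom.coe_toLinearMap] at h0
      rw [hrange] at hu
      obtain ⟨a, ha, b, hb, rfl⟩ := Submodule.mem_sup.1 hu
      obtain ⟨c, rfl⟩ := Submodule.mem_span_singleton.1 ha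
      obtain ⟨x, rfl⟩ := hb
      have hεa : εU K Lie ((c : K) • (1 : U)
          + ((ιU : Lie →ₗ⁅K⁆ U).toLinearMap x : U)) = c := by
        rw [map_add, map_smul, map_one]
        rw [LieHom.coe_toLinearMap, εU_ι]
        simp
      rw [hεa] at hε
      subst hε
      rw [zero_smul, zero_add] at hfu ⊢
      have hfx : (x : A) = 0 := by
        rw [LieHom.coe_toLinearMap] at hfu
        rw [UniversalEnvelopingAlgebra.lift_ι_apply] at hfu
        exact hfu
      have hx0 : x = 0 := Subtype.ext hfx
      rw [LieHom.coe_toLinearMap, hx0]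
      simp
    | succ m =>
      -- the reduced coproduct of u vanishes
      have hz : ΔU K Lie u - u ⊗ₜ[K] 1 - 1 ⊗ₜ[K] u
          ∈ TP K Lie (Efil K Lie ^ (m + 1)) (Efil K Lie ^ (m + 1)) :=
        reduced_comul_mem K Lie (m + 1) u hu hε
      obtain ⟨z', hz'⟩ := hz
      have hfz : TensorProduct.map (fA).toLinearMap (fA).toLinearMap
          (ΔU K Lie u - u ⊗ₜ[K] 1 - 1 ⊗ₜ[K] u) = 0 := by
        have e1 : TensorProduct.map (fA).toLinearMap (fA).toLinearMap (ΔU K Lie u) = 0 := by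
          rw [← comul_f K Lie hLie, hfu, map_zero]
        have e2 : TensorProduct.map (fA).toLinearMap (fA).toLinearMap (u ⊗ₜ[K] 1)
            = 0 := by
          rw [TensorProduct.map_tmul]
          simp only [AlgHom.toLinearMap_apply, hfu]
          rw [TensorProduct.zero_tmul]
        have e3 : TensorProduct.map (fA).toLinearMap (fA).toLinearMap ((1 : U) ⊗ₜ[K] u)
            = 0 := by
          rw [TensorProduct.map_tmul]
          simp only [AlgHom.toLinearMap_apply, hfu]
          rw [TensorProduct.tmul_zero]
        rw [map_sub, map_sub, e1, e2, e3, sub_zero, sub_zero]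
      -- injectivity of f ⊗ f on the filtration level
      set g : (Efil K Lie ^ (m + 1) : Submodule K U) →ₗ[K] A :=
        (fA).toLinearMap ∘ₗ (Efil K Lie ^ (m + 1)).subtype with hg
      have hginj : Function.Injective g := by
        intro a b hab
        have : fA ((a : U) - (b : U)) = 0 := by
          rw [map_sub]
          simpa [hg] using sub_eq_zero_of_eq hab
        have hmem : (a : U) - (b : U) ∈ Efil K Lie ^ (m + 1) :=
          Submodule.sub_mem _ a.2 b.2
        have := ih _ hmem this
        exact Subtype.ext (sub_eq_zero.1 this)
      have hmapinj : Function.Injective (TensorProduct.map g g) := by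
        have hfactor : TensorProduct.map g g
            = (g.rTensor A) ∘ₗ (g.lTensor (Efil K Lie ^ (m + 1) : Submodule K U)) := by
          show TensorProduct.map g g
            = (TensorProduct.map g LinearMap.id) ∘ₗ (TensorProduct.map LinearMap.id g)
          rw [← TensorProduct.map_comp, LinearMap.comp_id, LinearMap.id_comp]
        rw [hfactor]
        exact (Module.Flat.rTensor_preserves_injective_linearMap g hginj).comp
          (Module.Flat.lTensor_preserves_injective_linearMap g hginj)
      have hgg : TensorProduct.map g g z' = 0 := by
        rw [hg, TensorProduct.map_comp, LinearMap.comp_apply, hz']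
        exact hfz
      have hz0 : z' = 0 := hmapinj (by rw [hgg, map_zero])
      have hred : ΔU K Lie u - u ⊗ₜ[K] 1 - 1 ⊗ₜ[K] u = 0 := by
        rw [← hz', hz0, map_zero]
      have hΔu : ΔU K Lie u = u ⊗ₜ[K] 1 + 1 ⊗ₜ[K] u := by
        rw [sub_sub] at hred
        exact sub_eq_zero.1 hred
      -- the squaring operator
      have hsq : μU (ΔU K Lie u) - ((2 : K) ^ (m + 2)) • u ∈ Epre K Lie (m + 2) :=
        sq_filtration K Lie (m + 2) u hu
      have hμ : μU (ΔU K Lie u) = (2 : K) • u := by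
        rw [hΔu, map_add, LinearMap.mul'_apply, LinearMap.mul'_apply, mul_one, one_mul,
          two_smul]
      rw [hμ] at hsq
      have hsq' : ((2 : K) - (2 : K) ^ (m + 2)) • u ∈ Efil K Lie ^ (m + 1) := by
        have : ((2 : K) - (2 : K) ^ (m + 2)) • u
            = (2 : K) • u - ((2 : K) ^ (m + 2)) • u := by rw [sub_smul]
        rw [this]
        exact hsq
      have hc : ((2 : K) - (2 : K) ^ (m + 2)) ≠ 0 := by
        have h1 : ((2 : K) ^ (m + 2)) = ((2 ^ (m + 2) : ℕ) : K) := by push_cast; ring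
        have h2 : ((2 : K)) = ((2 : ℕ) : K) := by push_cast; ring
        rw [h1, h2, sub_ne_zero]
        intro h
        have : (2 : ℕ) = 2 ^ (m + 2) := Nat.cast_inj.mp h
        have hlt : (2 : ℕ) < 2 ^ (m + 2) := by
          calc (2 : ℕ) < 4 := by omega
          _ = 2 ^ 2 := by norm_num
          _ ≤ 2 ^ (m + 2) := Nat.pow_le_pow_right (by omega) (by omega)
        omega
      have humem : u ∈ Efil K Lie ^ (m + 1) := by
        have := Submodule.smul_mem _ ((2 : K) - (2 : K) ^ (m + 2))⁻¹ hsq'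
        rwa [inv_smul_smul₀ hc] at this
      exact ih u humem hfu

lemma f_injective : Function.Injective (fA : U → A) := by
  intro a b hab
  obtain ⟨n, hn⟩ := exists_mem_Efil_pow K Lie (a - b)
  have : fA (a - b) = 0 := by rw [map_sub, hab, sub_self]
  have := f_injective_on_pow K Lie hLie n _ hn this
  exact sub_eq_zero.1 this

end APart

end MM16
/-- **Milnor–Moore.** In characteristic zero, if a bialgebra `A` is
generated as an algebra by its primitives `P`, then `P` is closed under the commutator
bracket, and for any Lie subalgebra structure `L` on `P` (with the commutator bracket of
`A`) the canonical algebra homomorphism `U(L) → A` induced by the inclusion is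
bijective. -/
theorem stmt_16 (A : Type*) [CharZero K] [Ring A] [Bialgebra K A]
    (hgen : Algebra.adjoin K
        {x : A | Coalgebra.comul (R := K) x = x ⊗ₜ[K] 1 + 1 ⊗ₜ[K] x} = ⊤) :
    (∀ x y : A,
        Coalgebra.comul (R := K) x = x ⊗ₜ[K] 1 + 1 ⊗ₜ[K] x →
        Coalgebra.comul (R := K) y = y ⊗ₜ[K] 1 + 1 ⊗ₜ[K] y →
        Coalgebra.comul (R := K) (x * y - y * x)
          = (x * y - y * x) ⊗ₜ[K] 1 + 1 ⊗ₜ[K] (x * y - y * x)) ∧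
    ∀ Lie : LieSubalgebra K A,
      (Lie : Set A) = {x : A | Coalgebra.comul (R := K) x = x ⊗ₜ[K] 1 + 1 ⊗ₜ[K] x} →
      Function.Bijective (UniversalEnvelopingAlgebra.lift K Lie.incl) := by
  constructor
  · -- primitives are closed under the commutator bracket
    intro x y hx hy
    have hc : ∀ a b : A, Coalgebra.comul (R := K) (a * b)
        = Coalgebra.comul (R := K) a * Coalgebra.comul (R := K) b := fun a b => by
      simpa [Bialgebra.comulAlgHom_apply] using map_mul (Bialgebra.comulAlgHom K A) a b
    rw [map_sub, hc x y, hc y x, hx, hy]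
    simp only [add_mul, mul_add, Algebra.TensorProduct.tmul_mul_tmul, one_mul, mul_one,
      TensorProduct.sub_tmul, TensorProduct.tmul_sub]
    abel
  · intro Lie hLie
    constructor
    · exact MM16.f_injective K Lie hLie
    · -- surjectivity
      intro a
      have hle : Algebra.adjoin K
          {x : A | Coalgebra.comul (R := K) x = x ⊗ₜ[K] 1 + 1 ⊗ₜ[K] x}
          ≤ (UniversalEnvelopingAlgebra.lift K Lie.incl).range := by
        refine Algebra.adjoin_le ?_
        intro p hp
        have hp' : p ∈ Lie := by
          rw [← SetLike.mem_coe, hLie]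
          exact hp
        refine (AlgHom.mem_range _).2 ⟨UniversalEnvelopingAlgebra.ι K (⟨p, hp'⟩ : Lie), ?_⟩
        rw [UniversalEnvelopingAlgebra.lift_ι_apply]
        rfl
      exact (AlgHom.mem_range _).1 ((hgen ▸ hle) Algebra.mem_top)
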